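/- In the affine special linear group G = ASL(2,3), every maximal subgroup has index 3, 4, or 9, yet G/F(G) ≅ SL_2(3) is not supersolvable. -/

import Mathlib

open Matrix

/-- The vector group `(ZMod 3)²`, written multiplicatively. -/
abbrev V23 : Type := Multiplicative (Fin 2 → ZMod 3)

/-- A linear automorphism of `(ZMod 3)²` as a multiplicative automorphism of `V23`. -/
def linToMulAut : ((Fin 2 → ZMod 3) ≃ₗ[ZMod 3] (Fin 2 → ZMod 3)) →* MulAut V23 where
  toFun e := AddEquiv.toMultiplicative e.toAddEquiv
  map_one' := by ext x; rfl
  map_mul' e f := by ext x; rfl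

/-- The natural action of `SL₂(3)` on `(ZMod 3)²` by multiplicative automorphisms. -/
def aslAction : SpecialLinearGroup (Fin 2) (ZMod 3) →* MulAut V23 :=
  linToMulAut.comp SpecialLinearGroup.toLin'

/-- The affine special linear group `ASL(2,3) = (ZMod 3)² ⋊ SL₂(3)`. -/
abbrev ASL23 : Type := V23 ⋊[aslAction] SpecialLinearGroup (Fin 2) (ZMod 3)

/-- The Fitting subgroup: the join of all nilpotent normal subgroups. -/
def fittingSubgroup (G : Type*) [Group G] : Subgroup G :=
  ⨆ N : {N : Subgroup G // N.Normal ∧ Group.IsNilpotent N}, (N : Subgroup G)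

instance fittingSubgroup_normal (G : Type*) [Group G] : (fittingSubgroup G).Normal := by
  constructor
  intro x hx g
  refine Subgroup.iSup_induction _ (C := fun y => g * y * g⁻¹ ∈ fittingSubgroup G) hx
    (fun N y hy => ?_) (by simpa using Subgroup.one_mem _) (fun a b ha hb => ?_)
  · exact le_iSup (fun N : {N : Subgroup G // N.Normal ∧ Group.IsNilpotent N} =>
      (N : Subgroup G)) N (N.2.1.conj_mem y hy g)
  · show g * (a * b) * g⁻¹ ∈ fittingSubgroup G
    have h : g * (a * b) * g⁻¹ = (g * a * g⁻¹) * (g * b * g⁻¹) := by group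
    rw [h]; exact Subgroup.mul_mem _ ha hb

/-- Supersolvability: there is a chain of normal subgroups with cyclic factors. -/
def IsSupersolvable (G : Type*) [Group G] : Prop :=
  ∃ (n : ℕ) (c : Fin (n + 1) → Subgroup G), c 0 = ⊥ ∧ c (Fin.last n) = ⊤ ∧
    (∀ i : Fin n, c i.castSucc ≤ c i.succ) ∧ (∀ i, (c i).Normal) ∧
    ∀ i : Fin n, ∃ g : G, c i.succ = c i.castSucc ⊔ Subgroup.closure {g}


/-! ### Auxiliary material -/

abbrev S3 := SpecialLinearGroup (Fin 2) (ZMod 3)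

instance s3DecEq : DecidableEq S3 := fun a b =>
  decidable_of_iff (a.1 = b.1) ⟨fun h => Subtype.ext h, fun h => congrArg Subtype.val h⟩

def zz : S3 := ⟨!![-1,0;0,-1], by decide⟩
def t1 : S3 := ⟨!![1,1;0,1], by decide⟩
def t2 : S3 := ⟨!![1,0;1,1], by decide⟩

def zp (h y : S3) : Prop := ∃ n ∈ Finset.range 24, h ^ n = y
instance zpDec (h y : S3) : Decidable (zp h y) := by unfold zp; infer_instance

lemma cardS3 : Nat.card S3 = 24 := by rw [Nat.card_eq_fintype_card]; decide

open Subgroup in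
lemma zp_iff (h y : S3) : zp h y ↔ y ∈ zpowers h := by
  constructor
  · rintro ⟨n, -, rfl⟩; exact ⟨(n : ℤ), by simp⟩
  · rintro ⟨k, rfl⟩
    have hcard : (Fintype.card S3 : ℤ) = 24 := by
      rw [← Nat.card_eq_fintype_card, cardS3]; rfl
    refine ⟨(k % 24).toNat, Finset.mem_range.mpr ?_, ?_⟩
    · have h1 : k % 24 < 24 := Int.emod_lt_of_pos k (by norm_num)
      have h0 : 0 ≤ k % 24 := Int.emod_nonneg k (by norm_num)
      omega
    · have h0 : 0 ≤ k % 24 := Int.emod_nonneg k (by norm_num)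
      rw [← zpow_natCast, Int.toNat_of_nonneg h0, ← hcard, zpow_mod_card]

set_option maxHeartbeats 4000000 in
lemma factB : ∀ g : S3, ∃ h : S3, zp h zz ∧ zp h g := by decide

set_option maxHeartbeats 8000000 in
lemma factC : ∀ h y : S3, zp h y → y ≠ 1 → y ≠ zz →
    ¬ zp h (t1*y*t1⁻¹) ∨ ¬ zp h (t2*y*t2⁻¹) := by decide

lemma factF : ∀ g : S3, g * zz = zz * g := by decide

set_option maxHeartbeats 4000000 in
lemma factD : ∀ s : S3, s ≠ 1 → s = zz ∨ s^2 = zz ∨ s^3 = zz ∨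
    ∃ k : S3, (s * (k*s*k⁻¹))^2 = zz ∨ (s * (k*s⁻¹*k⁻¹))^2 = zz := by decide

set_option maxHeartbeats 4000000 in
lemma factG' : ∀ x : S3, ∃ a ∈ Finset.range 3, ∃ b ∈ Finset.range 3, ∃ c ∈ Finset.range 3,
    ∃ d ∈ Finset.range 3, t1^a * t2^b * t1^c * t2^d = x := by decide

lemma q8mul : ∀ a b : S3, a^4 = 1 → b^4 = 1 → (a*b)^4 = 1 := by decide

lemma zzmem : ∀ y : S3, zp zz y → y = 1 ∨ y = zz := by decide

open Subgroup

def Q8 : Subgroup S3 where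
  carrier := {g | g ^ 4 = 1}
  mul_mem' := fun {a b} ha hb => q8mul a b ha hb
  one_mem' := one_pow 4
  inv_mem' := fun {a} ha => by show a⁻¹ ^ 4 = 1; rw [inv_pow, ha, inv_one]

instance : DecidablePred (· ∈ Q8) := fun x => decidable_of_iff (x ^ 4 = 1) Iff.rfl

lemma cardQ8 : Nat.card Q8 = 8 := by rw [Nat.card_eq_fintype_card]; decide

lemma closureT : Subgroup.closure ({t1, t2} : Set S3) = ⊤ := by
  rw [eq_top_iff']; intro x
  obtain ⟨a, -, b, -, c, -, d, -, h⟩ := factG' x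
  have h1 : t1 ∈ Subgroup.closure ({t1, t2} : Set S3) := subset_closure (by simp)
  have h2 : t2 ∈ Subgroup.closure ({t1, t2} : Set S3) := subset_closure (by simp)
  rw [← h]
  exact mul_mem (mul_mem (mul_mem (pow_mem h1 a) (pow_mem h2 b)) (pow_mem h1 c)) (pow_mem h2 d)

lemma coatomS3 (H : Subgroup S3) (hH : IsCoatom H) : H.index = 3 ∨ H.index = 4 := by
  have hdvd : Nat.card H ∣ 24 := cardS3 ▸ card_subgroup_dvd_card H
  have hmul : Nat.card H * H.index = 24 := cardS3 ▸ H.card_mul_index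
  have hne : Nat.card H ≠ 24 := fun h => hH.1 (eq_top_of_card_eq _ (by rw [h, cardS3]))
  have hQ8top : Q8 ≠ ⊤ := by
    intro h
    have h2 : Nat.card Q8 = 24 := by
      rw [h, ← cardS3]; exact Nat.card_congr (Subgroup.topEquiv).toEquiv
    rw [cardQ8] at h2; omega
  have hpos : 0 < Nat.card H := Nat.card_pos
  have hle : Nat.card H ≤ 24 := Nat.le_of_dvd (by norm_num) hdvd
  have hQ8case : Nat.card H ∣ 4 → False := by
    intro h4
    have hle8 : H ≤ Q8 := by
      intro x hx
      show x ^ 4 = 1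
      apply orderOf_dvd_iff_pow_eq_one.mp
      have h := orderOf_dvd_natCard (⟨x, hx⟩ : H)
      rw [Subgroup.orderOf_mk] at h
      exact dvd_trans h h4
    have hne8 : H ≠ Q8 := by
      intro h; rw [h, cardQ8] at h4; norm_num at h4
    exact hQ8top (hH.2 Q8 (lt_of_le_of_ne hle8 hne8))
  have hcase3 : Nat.card H = 3 → False := by
    intro hc
    obtain ⟨x, hxH, hx1⟩ := (H.bot_or_exists_ne_one).resolve_left
      (by intro h; rw [h, Subgroup.card_eq_one.mpr rfl] at hc; norm_num at hc)
    have hox : orderOf x ∣ 3 := by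
      have h := orderOf_dvd_natCard (⟨x, hxH⟩ : H)
      rwa [Subgroup.orderOf_mk, hc] at h
    have h3 : orderOf x = 3 := ((Nat.dvd_prime (by norm_num)).mp hox).resolve_left
      (by simpa [orderOf_eq_one_iff] using hx1)
    have hx3 : x ^ 3 = 1 := orderOf_dvd_iff_pow_eq_one.mp (by rw [h3])
    have hx4 : x ^ 4 = x := by
      have h := pow_succ x 3
      rw [hx3, one_mul] at h
      norm_num at h
      exact h
    have hcomm : Commute x zz := factF x
    set y := x * zz with hy
    have hy4 : y ^ 4 = x := by
      rw [hy, hcomm.mul_pow, hx4, show zz ^ 4 = 1 by decide, mul_one]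
    have hy3 : y ^ 3 = zz := by
      rw [hy, hcomm.mul_pow, hx3, one_mul, show zz ^ 3 = zz by decide]
    have hy6 : y ^ 6 = 1 := by
      rw [hy, hcomm.mul_pow, show zz ^ 6 = 1 by decide, mul_one]
      exact orderOf_dvd_iff_pow_eq_one.mp (by rw [h3]; norm_num)
    have hzx : zpowers x ≤ H := zpowers_le.mpr hxH
    have hHx : zpowers x = H :=
      eq_of_le_of_card_ge hzx (by rw [Nat.card_zpowers, h3, hc])
    have hxy : x ∈ zpowers y := by rw [← hy4]; exact pow_mem (mem_zpowers y) 4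
    have hHy : H ≤ zpowers y := le_trans (le_of_eq hHx.symm) (zpowers_le.mpr hxy)
    have hzznH : zz ∉ H := by
      intro hzzH
      have ho2 : orderOf zz = 2 := orderOf_eq_prime (by decide) (by decide)
      have h := orderOf_dvd_natCard (⟨zz, hzzH⟩ : H)
      rw [Subgroup.orderOf_mk, hc, ho2] at h
      norm_num at h
    have hne' : H ≠ zpowers y := by
      intro h
      exact hzznH (by rw [h, ← hy3]; exact pow_mem (mem_zpowers y) 3)
    have htop := hH.2 _ (lt_of_le_of_ne hHy hne')
    have hd6 : Nat.card (zpowers y) ∣ 6 := by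
      rw [Nat.card_zpowers]; exact orderOf_dvd_iff_pow_eq_one.mpr hy6
    rw [htop, Subgroup.card_top, cardS3] at hd6
    norm_num at hd6
  have hcase12 : Nat.card H = 12 → False := by
    intro hc
    rw [hc] at hmul
    have hidx : H.index = 2 := by omega
    have ht1 : t1 ∈ H := by
      have h := Subgroup.sq_mem_of_index_two hidx (t1 ^ 2)
      rwa [show (t1 ^ 2) ^ 2 = t1 by decide] at h
    have ht2 : t2 ∈ H := by
      have h := Subgroup.sq_mem_of_index_two hidx (t2 ^ 2)
      rwa [show (t2 ^ 2) ^ 2 = t2 by decide] at h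
    refine hH.1 (top_le_iff.mp ?_)
    rw [← closureT]
    exact (closure_le H).mpr (by rintro g (rfl | rfl) <;> simpa)
  have hvals : Nat.card H = 1 ∨ Nat.card H = 2 ∨ Nat.card H = 3 ∨ Nat.card H = 4 ∨
      Nat.card H = 6 ∨ Nat.card H = 8 ∨ Nat.card H = 12 := by
    interval_cases h : Nat.card ↥H <;> revert hdvd hne <;> decide
  rcases hvals with hc | hc | hc | hc | hc | hc | hc
  · exact (hQ8case (by rw [hc]; norm_num)).elim
  · exact (hQ8case (by rw [hc]; norm_num)).elim
  · exact (hcase3 hc).elim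
  · exact (hQ8case (by rw [hc])).elim
  · rw [hc] at hmul; right; omega
  · rw [hc] at hmul; left; omega
  · exact (hcase12 hc).elim

lemma isSupersolvable_of_mulEquiv {A B : Type*} [Group A] [Group B] (e : A ≃* B)
    (h : IsSupersolvable A) : IsSupersolvable B := by
  obtain ⟨n, c, h0, hlast, hmono, hnorm, hcyc⟩ := h
  refine ⟨n, fun i => (c i).map e.toMonoidHom, ?_, ?_, ?_, ?_, ?_⟩
  · show Subgroup.map e.toMonoidHom (c 0) = ⊥
    rw [h0]; exact Subgroup.map_bot _
  · show Subgroup.map e.toMonoidHom (c (Fin.last n)) = ⊤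
    rw [hlast]; exact Subgroup.map_top_of_surjective _ e.surjective
  · intro i; exact Subgroup.map_mono (hmono i)
  · intro i; exact Subgroup.Normal.map (hnorm i) _ e.surjective
  · intro i
    obtain ⟨g, hg⟩ := hcyc i
    refine ⟨e g, ?_⟩
    show Subgroup.map e.toMonoidHom (c i.succ) =
      Subgroup.map e.toMonoidHom (c i.castSucc) ⊔ Subgroup.closure {e g}
    rw [hg, Subgroup.map_sup, MonoidHom.map_closure, Set.image_singleton]; rfl

lemma notSupS3 : ¬ IsSupersolvable S3 := by
  rintro ⟨n, c, h0, hlast, hmono, hnorm, hcyc⟩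
  by_cases hall : ∀ i : Fin n, c i.castSucc ≤ zpowers zz → c i.succ ≤ zpowers zz
  · have hind : ∀ j : Fin (n+1), c j ≤ zpowers zz := by
      intro j
      induction j using Fin.induction with
      | zero => rw [h0]; exact bot_le
      | succ i ih => exact hall i ih
    have hlt := hind (Fin.last n)
    rw [hlast] at hlt
    have ht1 : t1 ∈ zpowers zz := hlt (mem_top t1)
    have := zzmem t1 ((zp_iff _ _).mpr ht1)
    revert this; decide
  · push_neg at hall
    obtain ⟨i, hle, hnle⟩ := hall
    obtain ⟨g, hg⟩ := hcyc i
    obtain ⟨h, hz, hgh⟩ := factB g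
    have hsub : c i.succ ≤ zpowers h := by
      rw [hg]
      apply sup_le
      · exact le_trans hle (zpowers_le.mpr ((zp_iff h zz).mp hz))
      · rw [← zpowers_eq_closure]; exact zpowers_le.mpr ((zp_iff h g).mp hgh)
    rw [SetLike.le_def] at hnle
    push_neg at hnle
    obtain ⟨y, hyc, hynz⟩ := hnle
    have hy1 : y ≠ 1 := fun h => hynz (h ▸ one_mem _)
    have hyzz : y ≠ zz := fun h => hynz (h ▸ mem_zpowers zz)
    have hc1 : t1 * y * t1⁻¹ ∈ zpowers h := hsub ((hnorm i.succ).conj_mem y hyc t1)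
    have hc2 : t2 * y * t2⁻¹ ∈ zpowers h := hsub ((hnorm i.succ).conj_mem y hyc t2)
    rcases factC h y ((zp_iff h y).mpr (hsub hyc)) hy1 hyzz with hC | hC
    · exact hC ((zp_iff _ _).mpr hc1)
    · exact hC ((zp_iff _ _).mpr hc2)

instance aslDecEq : DecidableEq ASL23 := fun a b =>
  decidable_of_iff (a.left = b.left ∧ a.right = b.right)
    ⟨fun ⟨h1, h2⟩ => SemidirectProduct.ext h1 h2, fun h => by subst h; exact ⟨rfl, rfl⟩⟩

def rh : ASL23 →* S3 := SemidirectProduct.rightHom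
abbrev Vg : Subgroup ASL23 := rh.ker

lemma rh_surj : Function.Surjective rh := SemidirectProduct.rightHom_surjective

lemma mem_Vg {x : ASL23} : x ∈ Vg ↔ x.right = 1 := Iff.rfl

lemma comm_Vg (a b : ASL23) (ha : a.right = 1) (hb : b.right = 1) : a * b = b * a := by
  apply SemidirectProduct.ext
  · show a.left * aslAction a.right b.left = b.left * aslAction b.right a.left
    rw [ha, hb, _root_.map_one]
    exact mul_comm _ _
  · show a.right * b.right = b.right * a.right
    rw [ha, hb]

lemma key1 : ∀ u w : V23,
    (⟨w, 1⟩ : ASL23) * ⟨u, zz⟩ * (⟨w, 1⟩ : ASL23)⁻¹ * (⟨u, zz⟩ : ASL23)⁻¹ = ⟨w * w, 1⟩ := by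
  decide

lemma key3 : ∀ v : V23, (v * v) * (v * v) = v := by decide

lemma factA : ∀ v w : V23, v ≠ 1 → w ≠ 1 → ∃ A : S3,
    (⟨1, A⟩ : ASL23) * ⟨v, 1⟩ * (⟨1, A⟩ : ASL23)⁻¹ = ⟨w, 1⟩ := by decide

lemma exists_zz_mem (N : Subgroup ASL23) (hN : N.Normal) (h : ¬ N ≤ Vg) :
    ∃ u : V23, (⟨u, zz⟩ : ASL23) ∈ N := by
  rw [SetLike.le_def] at h
  push_neg at h
  obtain ⟨x, hxN, hxV⟩ := h
  have hs : x.right ≠ 1 := fun h => hxV (mem_Vg.mpr h)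
  have hNnorm : (N.map rh).Normal := hN.map rh rh_surj
  have hsN : x.right ∈ N.map rh := ⟨x, hxN, rfl⟩
  have hzzN : zz ∈ N.map rh := by
    rcases factD x.right hs with h1 | h1 | h1 | ⟨k, h1 | h1⟩
    · exact h1 ▸ hsN
    · exact h1 ▸ pow_mem hsN 2
    · exact h1 ▸ pow_mem hsN 3
    · exact h1 ▸ pow_mem (mul_mem hsN (hNnorm.conj_mem _ hsN k)) 2
    · exact h1 ▸ pow_mem (mul_mem hsN (hNnorm.conj_mem _ (inv_mem hsN) k)) 2
  obtain ⟨y, hyN, hy⟩ := hzzN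
  refine ⟨y.left, ?_⟩
  have : (⟨y.left, zz⟩ : ASL23) = y := by
    rw [← hy]; rfl
  rwa [this]

lemma V_le (N : Subgroup ASL23) (hN : N.Normal) (u : V23) (hu : (⟨u, zz⟩ : ASL23) ∈ N) :
    Vg ≤ N := by
  have hv : ∀ v : V23, (⟨v, 1⟩ : ASL23) ∈ N := by
    intro v
    have h1 : (⟨v*v, 1⟩ : ASL23) * ⟨u, zz⟩ * (⟨v*v, 1⟩ : ASL23)⁻¹ * (⟨u, zz⟩ : ASL23)⁻¹ ∈ N :=
      mul_mem (hN.conj_mem _ hu _) (inv_mem hu)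
    rw [key1, key3] at h1
    exact h1
  intro x hx
  have hr : x.right = 1 := mem_Vg.mp hx
  have : x = (⟨x.left, 1⟩ : ASL23) := by rw [← hr]
  rw [this]
  exact hv x.left

lemma centerVg : Subgroup.center ↥Vg = ⊤ := by
  rw [eq_top_iff']
  intro g
  rw [Subgroup.mem_center_iff]
  intro x
  exact Subtype.ext (comm_Vg x.1 g.1 (mem_Vg.mp x.2) (mem_Vg.mp g.2))

lemma nilpVg : Group.IsNilpotent ↥Vg :=
  ⟨1, by rw [Subgroup.upperCentralSeries_one]; exact centerVg⟩

open scoped commutatorElement in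
lemma fitting_eq : fittingSubgroup ASL23 = Vg := by
  apply le_antisymm
  · apply iSup_le
    rintro ⟨N, hNnorm, hNnilp⟩
    show N ≤ Vg
    by_contra h
    obtain ⟨u, hu⟩ := exists_zz_mem N hNnorm h
    have hV := V_le N hNnorm u hu
    have hmemV : ∀ v : V23, (⟨v, 1⟩ : ASL23) ∈ Vg := fun v => mem_Vg.mpr rfl
    have claim : ∀ k, ∀ v : V23, ∀ h' : (⟨v, 1⟩ : ASL23) ∈ N,
        (⟨⟨v, 1⟩, h'⟩ : ↥N) ∈ (⊤ : Subgroup ↥N).lowerCentralSeries k := by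
      intro k
      induction k with
      | zero => intro v h'; rw [Subgroup.lowerCentralSeries_zero]; exact Subgroup.mem_top _
      | succ k ih =>
        intro v h'
        rw [Subgroup.lowerCentralSeries_succ]
        have hvv := hV (hmemV (v * v))
        have heq : (⟨⟨v, 1⟩, h'⟩ : ↥N) = ⁅(⟨⟨v * v, 1⟩, hvv⟩ : ↥N), (⟨⟨u, zz⟩, hu⟩ : ↥N)⁆ := by
          apply Subtype.ext
          show (⟨v, 1⟩ : ASL23) = ⁅(⟨v * v, 1⟩ : ASL23), (⟨u, zz⟩ : ASL23)⁆
          rw [commutatorElement_def, key1, key3]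
        rw [heq]
        exact Subgroup.commutator_mem_commutator (ih (v * v) hvv) (Subgroup.mem_top _)
    obtain ⟨k, hk⟩ := Subgroup.nilpotent_iff_lowerCentralSeries.mp hNnilp
    have hone := claim k (Multiplicative.ofAdd ![1, 0]) (hV (hmemV _))
    rw [hk, Subgroup.mem_bot] at hone
    have hcontra : (⟨Multiplicative.ofAdd ![1, 0], 1⟩ : ASL23) = 1 := congrArg Subtype.val hone
    revert hcontra; decide
  · exact le_iSup
      (fun N : {N : Subgroup ASL23 // N.Normal ∧ Group.IsNilpotent N} => (N : Subgroup ASL23))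
      ⟨Vg, inferInstance, nilpVg⟩

noncomputable def fitEquiv : (ASL23 ⧸ fittingSubgroup ASL23) ≃* S3 :=
  (QuotientGroup.quotientMulEquivOfEq fitting_eq).trans
    (QuotientGroup.quotientKerEquivOfSurjective rh rh_surj)

lemma cardV23 : Nat.card V23 = 9 := by rw [Nat.card_eq_fintype_card]; decide

lemma cardVg : Nat.card Vg = 9 := by
  have h : Vg = (SemidirectProduct.inl (φ := aslAction)).range :=
    (SemidirectProduct.range_inl_eq_ker_rightHom).symm
  rw [h, ← cardV23]
  exact (Nat.card_congr (MonoidHom.ofInjective SemidirectProduct.inl_injective).toEquiv).symm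

lemma cardASL : Nat.card ASL23 = 216 := by
  have h := Subgroup.card_mul_index Vg
  have hidx : Vg.index = 24 := by
    rw [Subgroup.index_eq_card, ← cardS3]
    exact Nat.card_congr (QuotientGroup.quotientKerEquivOfSurjective rh
      SemidirectProduct.rightHom_surjective).toEquiv
  rw [cardVg, hidx] at h
  omega

lemma coatomASL (M : Subgroup ASL23) (hM : IsCoatom M) :
    M.index = 3 ∨ M.index = 4 ∨ M.index = 9 := by
  by_cases hV : Vg ≤ M
  · have hker : rh.ker ≤ M := hV
    have hidx : (M.map rh).index = M.index :=
      Subgroup.index_map_eq M rh_surj hker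
    have hco : IsCoatom (M.map rh) := by
      constructor
      · intro h
        apply hM.1
        have h2 := congrArg (Subgroup.comap rh) h
        rwa [Subgroup.comap_map_eq, sup_of_le_left hker, Subgroup.comap_top] at h2
      · intro K hK
        have h1 : M < K.comap rh := by
          refine lt_of_le_of_ne (fun x hx => hK.le ⟨x, hx, rfl⟩) ?_
          intro h
          apply hK.ne'
          rw [h, Subgroup.map_comap_eq_self_of_surjective rh_surj]
        have h2 := hM.2 _ h1
        have h3 := congrArg (Subgroup.map rh) h2
        rwa [Subgroup.map_comap_eq_self_of_surjective rh_surj,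
          Subgroup.map_top_of_surjective _ rh_surj] at h3
    rcases coatomS3 _ hco with h | h
    · left; rw [← hidx]; exact h
    · right; left; rw [← hidx]; exact h
  · right; right
    have hsup : M ⊔ Vg = ⊤ := hM.2 (M ⊔ Vg) (left_lt_sup.mpr hV)
    have hWnormal : (M ⊓ Vg).Normal := by
      constructor
      intro x hx g
      have hg : g ∈ (↑(M ⊔ Vg) : Set ASL23) := by rw [hsup]; trivial
      rw [Subgroup.mul_normal M Vg] at hg
      obtain ⟨m, hm, v, hv, rfl⟩ := hg
      have hvx : v * x = x * v := comm_Vg v x (mem_Vg.mp hv) (mem_Vg.mp hx.2)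
      have hvxv : v * x * v⁻¹ = x := by rw [hvx]; exact mul_inv_cancel_right x v
      have hkey : m * v * x * (m * v)⁻¹ = m * x * m⁻¹ := by
        rw [_root_.mul_inv_rev]
        calc m * v * x * (v⁻¹ * m⁻¹) = m * (v * x * v⁻¹) * m⁻¹ := by group
          _ = m * x * m⁻¹ := by rw [hvxv]
      rw [hkey]
      exact ⟨M.mul_mem (M.mul_mem hm hx.1) (M.inv_mem hm),
        (MonoidHom.normal_ker rh).conj_mem x hx.2 m⟩
    have hWbot : M ⊓ Vg = ⊥ := by
      by_contra hne
      obtain ⟨x, hxW, hx1⟩ := (M ⊓ Vg).bot_or_exists_ne_one.resolve_left hne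
      have hxr : x.right = 1 := mem_Vg.mp hxW.2
      have hxeq : x = (⟨x.left, 1⟩ : ASL23) := by rw [← hxr]
      have hxl : x.left ≠ 1 := by
        intro h
        apply hx1
        rw [hxeq, h]
        rfl
      have hall : Vg ≤ M ⊓ Vg := by
        intro y hy
        have hyr : y.right = 1 := mem_Vg.mp hy
        have hyeq : y = (⟨y.left, 1⟩ : ASL23) := by rw [← hyr]
        by_cases hyl : y.left = 1
        · have : y = 1 := by rw [hyeq, hyl]; rfl
          rw [this]; exact (M ⊓ Vg).one_mem
        · obtain ⟨A, hA⟩ := factA x.left y.left hxl hyl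
          have hconj := hWnormal.conj_mem x hxW ⟨1, A⟩
          have heq2 : (⟨1, A⟩ : ASL23) * x * (⟨1, A⟩ : ASL23)⁻¹ = y := by
            conv_lhs => rw [hxeq]
            rw [hA, ← hyeq]
          rw [← heq2]
          exact hconj
      exact hV (le_trans hall inf_le_left)
    have hmapM : M.map rh = ⊤ := by
      have h := congrArg (Subgroup.map rh) hsup
      rw [Subgroup.map_sup, Subgroup.map_top_of_surjective _
        rh_surj] at h
      have hmapV : Vg.map rh = ⊥ := by
        rw [eq_bot_iff]
        rintro s ⟨x, hx, rfl⟩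
        exact Subgroup.mem_bot.mpr hx
      rwa [hmapV, sup_bot_eq] at h
    set f := rh.comp M.subtype with hf
    have hinj : Function.Injective f := by
      rw [← MonoidHom.ker_eq_bot_iff, eq_bot_iff]
      rintro ⟨x, hxM⟩ hx
      have hxV : x ∈ Vg := hx
      have hmem : x ∈ M ⊓ Vg := ⟨hxM, hxV⟩
      rw [hWbot] at hmem
      exact Subgroup.mem_bot.mpr (Subtype.ext (Subgroup.mem_bot.mp hmem))
    have hsurj : Function.Surjective f := by
      intro s
      have hs : s ∈ M.map rh := by rw [hmapM]; trivial
      obtain ⟨x, hx, rfl⟩ := hs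
      exact ⟨⟨x, hx⟩, rfl⟩
    have hcardM : Nat.card M = 24 := by
      rw [← cardS3]
      exact Nat.card_congr (Equiv.ofBijective f ⟨hinj, hsurj⟩)
    have h := Subgroup.card_mul_index M
    rw [hcardM, cardASL] at h
    omega


theorem stmt_13 :
    (∀ M : Subgroup ASL23, IsCoatom M → M.index = 3 ∨ M.index = 4 ∨ M.index = 9) ∧
    Nonempty ((ASL23 ⧸ fittingSubgroup ASL23) ≃* SpecialLinearGroup (Fin 2) (ZMod 3)) ∧
    ¬ IsSupersolvable (ASL23 ⧸ fittingSubgroup ASL23) := by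
  refine ⟨coatomASL, ⟨fitEquiv⟩, fun h => notSupS3 (isSupersolvable_of_mulEquiv fitEquiv h)⟩
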